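/- Let s be a weak composition, T an s-decreasing tree, and (a,b), (c,d) tree ascents of T with a < c. Then the three sets A_T(a,b), A_T(c,d), and F_T(a,c) are pairwise disjoint. -/
import Mathlib


open scoped Classical

/-- An `s`-decreasing tree with internal vertices `1,…,n` (the root is `n`), encoded by
recording, for each non-root internal vertex `v`, its parent `parent v` (an internal vertex
with a larger label, so that labels decrease away from the root) and the index `idx v` of
the child slot of `parent v` (among `0,…,s (parent v)`, left to right) containing `v`.
Distinct internal vertices occupy distinct child slots; all remaining slots are leaves. -/
structure SDecTree (n : ℕ) (s : ℕ → ℕ) where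
  parent : ℕ → ℕ
  idx : ℕ → ℕ
  parent_gt : ∀ v, 1 ≤ v → v < n → v < parent v
  parent_le : ∀ v, 1 ≤ v → v < n → parent v ≤ n
  idx_le : ∀ v, 1 ≤ v → v < n → idx v ≤ s (parent v)
  slot_inj : ∀ v w, 1 ≤ v → v < n → 1 ≤ w → w < n →
      parent v = parent w → idx v = idx w → v = w
  parent_out : ∀ v, v = 0 ∨ n ≤ v → parent v = 0
  idx_out : ∀ v, v = 0 ∨ n ≤ v → idx v = 0

namespace SDecTree

variable {n : ℕ} {s : ℕ → ℕ}

/-- `y` is a weak ancestor of `x`, i.e. `x` is a labeled vertex of the subtree `T^y`. -/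
def Descend (T : SDecTree n s) (x y : ℕ) : Prop :=
  ∃ k, T.parent^[k] x = y ∧ ∀ m ≤ k, 1 ≤ T.parent^[m] x ∧ T.parent^[m] x ≤ n

/-- `x` is a labeled vertex of the subtree `T^y_j` rooted at the `j`-th child of `y`. -/
def InSub (T : SDecTree n s) (y j x : ℕ) : Prop :=
  ∃ c, T.Descend x c ∧ T.parent c = y ∧ T.idx c = j

/-- `x` lies strictly left of `y` in the planar tree `T`. -/
def LeftOf (T : SDecTree n s) (x y : ℕ) : Prop :=
  ∃ z j₁ j₂, j₁ < j₂ ∧ T.InSub z j₁ x ∧ T.InSub z j₂ y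

/-- The cardinality `#_T(y,x)` of the pair `(y,x)`: it is `j` if `x ∈ T^y_j`
(so `0` if `x ∈ T^y_0` and `s y` if `x ∈ T^y_{s y}`), `0` if `x` is left of `y`, and
`s y` if `x` is right of `y`; it is `0` for out-of-range pairs. -/
noncomputable def card (T : SDecTree n s) (y x : ℕ) : ℕ :=
  if h : ∃ j, T.InSub y j x then h.choose
  else if 1 ≤ x ∧ x < y ∧ y ≤ n ∧ ¬ T.LeftOf x y then s y else 0

/-- `x` is a labeled vertex of `T^a ∖ 0`, i.e. of `T^a` with `T^a_0` replaced by a leaf. -/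
def InSubMinus0 (T : SDecTree n s) (a x : ℕ) : Prop :=
  x = a ∨ ∃ j, 0 < j ∧ T.InSub a j x

/-- `(a,b)` is a tree ascent of `T`. -/
def TreeAscent (T : SDecTree n s) (a b : ℕ) : Prop :=
  1 ≤ a ∧ a < b ∧ b ≤ n ∧
  (∃ i, i < s b ∧ T.InSub b i a) ∧
  (∀ e j, a < e → e < b → T.InSub e j a → j = s e) ∧
  (0 < s a → ∀ x, ¬ T.InSub a (s a) x)

end SDecTree

/-- A multi-inversion set (encoded by its multiplicity function) is transitive:
if `a < b < c` then `#(b,a) = 0` or `#(c,a) ≥ #(c,b)`. -/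
def IsTransitiveInv (I : ℕ → ℕ → ℕ) : Prop :=
  ∀ a b c, a < b → b < c → I b a = 0 ∨ I c b ≤ I c a

/-- The transitive closure of a multi-inversion set: the smallest (by inclusion, i.e.
pointwise on multiplicities) transitive multi-inversion set containing it. -/
noncomputable def tcInv (I : ℕ → ℕ → ℕ) : ℕ → ℕ → ℕ := fun y x =>
  sInf {m | ∃ J : ℕ → ℕ → ℕ, IsTransitiveInv J ∧ (∀ y' x', I y' x' ≤ J y' x') ∧ J y x = m}

/-- Add one copy of the inversion `(b,a)` to `I`, capping the multiplicity at `s b`. -/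
def addInv (s : ℕ → ℕ) (I : ℕ → ℕ → ℕ) (b a : ℕ) : ℕ → ℕ → ℕ := fun y x =>
  if y = b ∧ x = a then min (I y x + 1) (s y) else I y x

namespace SDecTree

variable {n : ℕ} {s : ℕ → ℕ}

/-- The `s`-weak order: `T ⪯ Z` iff `#_T(y,x) ≤ #_Z(y,x)` for all pairs. -/
def wle (T Z : SDecTree n s) : Prop := ∀ y x, T.card y x ≤ Z.card y x

/-- Strict `s`-weak order. -/
def wlt (T Z : SDecTree n s) : Prop := wle T Z ∧ ¬ wle Z T

/-- Cover relation in the `s`-weak order. -/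
def wcov (T Z : SDecTree n s) : Prop := wlt T Z ∧ ∀ U, wlt T U → wlt U Z → False

/-- `W` is the join of `T` and `Z` in the `s`-weak order. -/
def IsJoin (T Z W : SDecTree n s) : Prop :=
  wle T W ∧ wle Z W ∧ ∀ U, wle T U → wle Z U → wle W U

/-- `Z` is the `s`-tree rotation of `T` along the tree ascent `(a,b)`, i.e.
`inv Z = (inv T + (b,a))^tc`. -/
def IsRotation (T Z : SDecTree n s) (a b : ℕ) : Prop :=
  T.TreeAscent a b ∧
  ∀ y x, 1 ≤ x → x < y → y ≤ n → Z.card y x = tcInv (addInv s T.card b a) y x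

/-- The set `A_T(a,b)` of inversions added by a rotation producing `Z`: the pairs `(f,e)`
with `#_Z(f,e) > #_T(f,e)`. -/
def Aset (T Z : SDecTree n s) : Set (ℕ × ℕ) :=
  {p | T.card p.1 p.2 < Z.card p.1 p.2}

/-- The set `A_T(a,b)` described directly via the transitive closure. -/
def ARot (T : SDecTree n s) (a b : ℕ) : Set (ℕ × ℕ) :=
  {p | T.card p.1 p.2 < tcInv (addInv s T.card b a) p.1 p.2}

/-- The set `F_T(a,c)` (here `b` and `d` are the partners of `a` and `c` in the
respective tree ascents `(a,b)` and `(c,d)`): it is `{(d,e) : e ∈ T^a∖0}` if `b = c`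
and `a ∈ T^c_0`, and empty otherwise. -/
def Fset (T : SDecTree n s) (a b c d : ℕ) : Set (ℕ × ℕ) :=
  {p | b = c ∧ T.InSub c 0 a ∧ p.1 = d ∧ T.InSubMinus0 a p.2}

/-- `T` is an `s`-Tamari tree: `#_T(c,a) ≤ #_T(c,b)` whenever `a < b < c`. -/
def IsTamari (T : SDecTree n s) : Prop :=
  ∀ a b c, a < b → b < c → T.card c a ≤ T.card c b

/-- `(a,b)` is a Tamari tree ascent of `T`: `a` is a non-rightmost child of `b`. -/
def TamariAscent (T : SDecTree n s) (a b : ℕ) : Prop :=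
  1 ≤ a ∧ a < n ∧ T.parent a = b ∧ T.card b a < s b

/-- `Z` is the `s`-Tamari rotation of `T` along the Tamari tree ascent `(a,b)`. -/
def IsTamRotation (T Z : SDecTree n s) (a b : ℕ) : Prop :=
  T.TamariAscent a b ∧
  ∀ y x, 1 ≤ x → x < y → y ≤ n → Z.card y x = tcInv (addInv s T.card b a) y x

/-- Cover relation in the `s`-Tamari lattice. -/
def tamcov (T Z : SDecTree n s) : Prop :=
  IsTamari T ∧ IsTamari Z ∧ wlt T Z ∧ ∀ U, IsTamari U → wlt T U → wlt U Z → False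

/-- `W` is the join of `T` and `Z` in the `s`-Tamari lattice. -/
def IsTamJoin (T Z W : SDecTree n s) : Prop :=
  IsTamari W ∧ wle T W ∧ wle Z W ∧ ∀ U, IsTamari U → wle T U → wle Z U → wle W U

/-- The open interval `(T,Z)` in the `s`-weak order. -/
def OpenInterval (T Z : SDecTree n s) : Set (SDecTree n s) := {U | wlt T U ∧ wlt U Z}

/-- A set of trees forming a chain in the `s`-weak order. -/
def IsChainSet (C : Set (SDecTree n s)) : Prop :=
  C.Pairwise fun U V => wlt U V ∨ wlt V U

/-- The geometric realization of the order complex `Δ(T,Z)` of the open interval `(T,Z)`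
in the `s`-weak order: the space of finitely supported probability vectors on the vertex
set whose support is a chain of the open interval. -/
def orderComplex (T Z : SDecTree n s) : Set (SDecTree n s → ℝ) :=
  {f | (∀ U, 0 ≤ f U) ∧ (Function.support f).Finite ∧
    Function.support f ⊆ OpenInterval T Z ∧ IsChainSet (Function.support f) ∧
    ∑ᶠ U, f U = 1}

/-- The geometric realization of the order complex of the open interval `(T,Z)` in the
`s`-Tamari lattice. -/
def tamOrderComplex (T Z : SDecTree n s) : Set (SDecTree n s → ℝ) :=
  {f | (∀ U, 0 ≤ f U) ∧ (Function.support f).Finite ∧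
    Function.support f ⊆ {U | IsTamari U ∧ wlt T U ∧ wlt U Z} ∧
    IsChainSet (Function.support f) ∧ ∑ᶠ U, f U = 1}

end SDecTree

/-- The list of labels of the consecutive cover relations along a saturated chain,
recorded as a list of poset elements. -/
def labelsOf {α : Type*} (lab : α → α → ℕ) (L : List α) : List ℕ :=
  (L.zip L.tail).map fun p => lab p.1 p.2

namespace SDecTree

variable {n : ℕ} {s : ℕ → ℕ} (T : SDecTree n s)

lemma lt_parent {v : ℕ} (h1 : 1 ≤ v) (h2 : v ≤ n) (h3 : 1 ≤ T.parent v) :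
    v < T.parent v := by
  rcases lt_or_eq_of_le h2 with h | h
  · exact T.parent_gt v h1 h
  · have := T.parent_out v (Or.inr (le_of_eq h.symm))
    omega

variable {T}

lemma chain_lt {x k : ℕ} (hb : ∀ m ≤ k, 1 ≤ T.parent^[m] x ∧ T.parent^[m] x ≤ n) :
    ∀ {m₁ m₂ : ℕ}, m₁ < m₂ → m₂ ≤ k → T.parent^[m₁] x < T.parent^[m₂] x := by
  intro m₁ m₂
  induction m₂ with
  | zero => omega
  | succ m ih =>
    intro hlt hle
    have hstep : T.parent^[m] x < T.parent^[m + 1] x := by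
      have h1 := hb m (by omega)
      have h2 := hb (m + 1) hle
      rw [Function.iterate_succ_apply'] at h2 ⊢
      exact T.lt_parent h1.1 h1.2 h2.1
    rcases Nat.lt_or_ge m₁ m with h | h
    · exact lt_trans (ih h (by omega)) hstep
    · have : m₁ = m := by omega
      subst this; exact hstep

lemma chain_le {x k : ℕ} (hb : ∀ m ≤ k, 1 ≤ T.parent^[m] x ∧ T.parent^[m] x ≤ n)
    {m₁ m₂ : ℕ} (h : m₁ ≤ m₂) (h2 : m₂ ≤ k) : T.parent^[m₁] x ≤ T.parent^[m₂] x := by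
  rcases lt_or_eq_of_le h with h | h
  · exact le_of_lt (chain_lt hb h h2)
  · subst h; rfl

lemma descend_refl {x : ℕ} (h1 : 1 ≤ x) (h2 : x ≤ n) : T.Descend x x :=
  ⟨0, rfl, fun m hm => by interval_cases m; exact ⟨h1, h2⟩⟩

lemma Descend.le {x y : ℕ} (h : T.Descend x y) : x ≤ y := by
  obtain ⟨k, hk, hb⟩ := h
  have := chain_le hb (Nat.zero_le k) le_rfl
  rwa [Function.iterate_zero_apply, hk] at this

lemma Descend.one_le {x y : ℕ} (h : T.Descend x y) : 1 ≤ x ∧ x ≤ n := by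
  obtain ⟨k, hk, hb⟩ := h
  exact hb 0 (Nat.zero_le k)

lemma Descend.one_le' {x y : ℕ} (h : T.Descend x y) : 1 ≤ y ∧ y ≤ n := by
  obtain ⟨k, hk, hb⟩ := h
  rw [← hk]; exact hb k le_rfl

lemma Descend.trans {x y z : ℕ} (h1 : T.Descend x y) (h2 : T.Descend y z) :
    T.Descend x z := by
  obtain ⟨k₁, hk₁, hb₁⟩ := h1
  obtain ⟨k₂, hk₂, hb₂⟩ := h2
  refine ⟨k₂ + k₁, ?_, ?_⟩
  · rw [Function.iterate_add_apply, hk₁, hk₂]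
  · intro m hm
    rcases Nat.le_total m k₁ with h | h
    · exact hb₁ m h
    · have : T.parent^[m] x = T.parent^[m - k₁] y := by
        rw [← hk₁, ← Function.iterate_add_apply]
        congr 1; omega
      rw [this]; exact hb₂ _ (by omega)

lemma Descend.antisymm {x y : ℕ} (h1 : T.Descend x y) (h2 : T.Descend y x) : x = y :=
  le_antisymm h1.le h2.le

lemma descend_step {x y : ℕ} (h : T.Descend x y) (hne : x ≠ y) :
    T.Descend (T.parent x) y := by
  obtain ⟨k, hk, hb⟩ := h
  cases k with
  | zero => exact absurd hk hne
  | succ k =>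
    refine ⟨k, ?_, ?_⟩
    · rw [← Function.iterate_succ_apply]; exact hk
    · intro m hm
      rw [← Function.iterate_succ_apply]
      exact hb (m + 1) (by omega)

/-- Any two ancestors of `x` are comparable. -/
lemma descend_total {x y z : ℕ} (h1 : T.Descend x y) (h2 : T.Descend x z) :
    T.Descend y z ∨ T.Descend z y := by
  obtain ⟨k₁, hk₁, hb₁⟩ := h1
  obtain ⟨k₂, hk₂, hb₂⟩ := h2
  rcases Nat.le_total k₁ k₂ with h | h
  · left
    refine ⟨k₂ - k₁, ?_, ?_⟩
    · rw [← hk₁, ← Function.iterate_add_apply]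
      rw [← hk₂]; congr 1; omega
    · intro m hm
      have : T.parent^[m] y = T.parent^[m + k₁] x := by
        rw [← hk₁, ← Function.iterate_add_apply]
      rw [this]; exact hb₂ _ (by omega)
  · right
    refine ⟨k₁ - k₂, ?_, ?_⟩
    · rw [← hk₂, ← Function.iterate_add_apply]
      rw [← hk₁]; congr 1; omega
    · intro m hm
      have : T.parent^[m] z = T.parent^[m + k₂] x := by
        rw [← hk₂, ← Function.iterate_add_apply]
      rw [this]; exact hb₁ _ (by omega)

lemma descend_root {u : ℕ} (h1 : 1 ≤ u) (h2 : u ≤ n) : T.Descend u n := by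
  have key : ∀ d u, n - u ≤ d → 1 ≤ u → u ≤ n → T.Descend u n := by
    intro d
    induction d with
    | zero =>
      intro u hd h1 h2
      have : u = n := by omega
      subst this; exact descend_refl h1 h2
    | succ d ih =>
      intro u hd h1 h2
      rcases lt_or_eq_of_le h2 with h | h
      · have hp1 : u < T.parent u := T.parent_gt u h1 h
        have hp2 : T.parent u ≤ n := T.parent_le u h1 h
        obtain ⟨k, hk, hb⟩ := ih (T.parent u) (by omega) (by omega) hp2
        refine ⟨k + 1, ?_, ?_⟩
        · rw [Function.iterate_succ_apply]; exact hk
        · intro m hm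
          cases m with
          | zero => exact ⟨h1, h2⟩
          | succ m => rw [Function.iterate_succ_apply]; exact hb m (by omega)
      · subst h; exact descend_refl h1 h2
  exact key (n - u) u le_rfl h1 h2

end SDecTree
namespace SDecTree

variable {n : ℕ} {s : ℕ → ℕ} {T : SDecTree n s}

lemma inSub_zero {j x : ℕ} (h : T.InSub 0 j x) : j = 0 := by
  obtain ⟨c, hd, hp, hi⟩ := h
  have hc := hd.one_le'
  have : c = n := by
    by_contra hne
    have : c < n := by omega
    have := T.parent_gt c hc.1 this
    omega
  rw [← hi, this]; exact T.idx_out n (Or.inr le_rfl)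

lemma InSub.descend {y j x : ℕ} (hy : 1 ≤ y) (h : T.InSub y j x) : T.Descend x y := by
  obtain ⟨c, hd, hp, hi⟩ := h
  obtain ⟨k, hk, hb⟩ := hd
  refine ⟨k + 1, ?_, ?_⟩
  · rw [Function.iterate_succ_apply', hk, hp]
  · intro m hm
    rcases Nat.lt_or_ge m (k + 1) with h | h
    · exact hb m (by omega)
    · have : m = k + 1 := by omega
      subst this
      rw [Function.iterate_succ_apply', hk, hp]
      refine ⟨hy, ?_⟩
      have hc := hb k le_rfl
      rw [hk] at hc
      rw [← hp]
      rcases lt_or_eq_of_le hc.2 with h' | h'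
      · exact T.parent_le c hc.1 h'
      · have := T.parent_out c (Or.inr (le_of_eq h'.symm)); omega

lemma inSub_unique {y j₁ j₂ x : ℕ} (h1 : T.InSub y j₁ x) (h2 : T.InSub y j₂ x) :
    j₁ = j₂ := by
  obtain ⟨c₁, ⟨k₁, hk₁, hb₁⟩, hp₁, hi₁⟩ := h1
  obtain ⟨c₂, ⟨k₂, hk₂, hb₂⟩, hp₂, hi₂⟩ := h2
  have key : ∀ (k₁ k₂ c₁ c₂ : ℕ), T.parent^[k₁] x = c₁ → T.parent^[k₂] x = c₂ →
      (∀ m ≤ k₁, 1 ≤ T.parent^[m] x ∧ T.parent^[m] x ≤ n) →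
      (∀ m ≤ k₂, 1 ≤ T.parent^[m] x ∧ T.parent^[m] x ≤ n) →
      T.parent c₁ = y → T.parent c₂ = y → k₁ < k₂ → False := by
    clear hk₁ hk₂ hb₁ hb₂ hp₁ hp₂ hi₁ hi₂ c₁ c₂ k₁ k₂
    intro k₁ k₂ c₁ c₂ hk₁ hk₂ hb₁ hb₂ hp₁ hp₂ hlt
    have hy : T.parent^[k₁ + 1] x = y := by
      rw [Function.iterate_succ_apply', hk₁, hp₁]
    have hyb := hb₂ (k₁ + 1) (by omega)
    rw [hy] at hyb
    have h1 : y ≤ c₂ := by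
      have := chain_le hb₂ (show k₁ + 1 ≤ k₂ by omega) le_rfl
      rwa [hy, hk₂] at this
    have hc₂ := hb₂ k₂ le_rfl
    rw [hk₂] at hc₂
    have : c₂ < T.parent c₂ := T.lt_parent hc₂.1 hc₂.2 (by rw [hp₂]; exact hyb.1)
    omega
  have : k₁ = k₂ := by
    by_contra hne
    rcases Nat.lt_or_ge k₁ k₂ with h | h
    · exact key k₁ k₂ c₁ c₂ hk₁ hk₂ hb₁ hb₂ hp₁ hp₂ h
    · exact key k₂ k₁ c₂ c₁ hk₂ hk₁ hb₂ hb₁ hp₂ hp₁ (by omega)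
  subst this
  rw [← hi₁, ← hi₂, ← hk₁, ← hk₂]

lemma inSub_valid {y j x : ℕ} (hy : 1 ≤ y) (h : T.InSub y j x) :
    1 ≤ x ∧ x < y ∧ y ≤ n ∧ j ≤ s y := by
  obtain ⟨c, hd, hp, hi⟩ := h
  subst hp
  have hx := hd.one_le
  have hc := hd.one_le'
  have hcn : c < n := by
    by_contra hcn
    have := T.parent_out c (Or.inr (by omega)); omega
  have h1 : c < T.parent c := T.parent_gt c hc.1 hcn
  have h2 : T.parent c ≤ n := T.parent_le c hc.1 hcn
  refine ⟨hx.1, by have := hd.le; omega, by omega, ?_⟩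
  rw [← hi]
  exact T.idx_le c hc.1 hcn

lemma exists_inSub_of_descend {x y : ℕ} (h : T.Descend x y) (hne : x ≠ y) :
    ∃ j, T.InSub y j x := by
  obtain ⟨k, hk, hb⟩ := h
  cases k with
  | zero => exact absurd hk hne
  | succ k =>
    refine ⟨T.idx (T.parent^[k] x), T.parent^[k] x, ⟨k, rfl, fun m hm => hb m (by omega)⟩,
      ?_, rfl⟩
    have := hk; rwa [Function.iterate_succ_apply'] at this

lemma InSub.congr {y j x u : ℕ} (h : T.InSub y j x) (hd : T.Descend u x) :
    T.InSub y j u := by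
  obtain ⟨c, hdc, hp, hi⟩ := h
  exact ⟨c, hd.trans hdc, hp, hi⟩

/-- If `u ≤ z₁ ≤ z₂` in the ancestor order, the slot of `u` at `z₂` is the slot of `z₁`. -/
lemma inSub_between {u z₁ z₂ l : ℕ} (h1 : T.Descend u z₁) (h2 : T.Descend z₁ z₂)
    (hne : z₁ ≠ z₂) (h : T.InSub z₂ l u) : T.InSub z₂ l z₁ := by
  obtain ⟨j, hj⟩ := exists_inSub_of_descend h2 hne
  have := hj.congr h1
  rwa [← inSub_unique h this] at hj

end SDecTree
namespace SDecTree

variable {n : ℕ} {s : ℕ → ℕ} {T : SDecTree n s}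

lemma leftOf_witness_pos {v z j₁ j₂ : ℕ} (hlt : j₁ < j₂) (h : T.InSub z j₂ v) :
    1 ≤ z := by
  by_contra hz
  have : z = 0 := by omega
  subst this
  have := inSub_zero h
  omega

lemma not_leftOf_left {x y : ℕ} (h : T.Descend x y) : ¬ T.LeftOf x y := by
  rintro ⟨z, j₁, j₂, hlt, hx, hy⟩
  have := hy.congr h
  have := inSub_unique hx this
  omega

lemma not_leftOf_right {x y : ℕ} (h : T.Descend x y) : ¬ T.LeftOf y x := by
  rintro ⟨z, j₁, j₂, hlt, hy, hx⟩
  have := hy.congr h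
  have := inSub_unique hx this
  omega

lemma LeftOf.descend_left {x u v : ℕ} (h : T.LeftOf u v) (hd : T.Descend x u) :
    T.LeftOf x v := by
  obtain ⟨z, j₁, j₂, hlt, hu, hv⟩ := h
  exact ⟨z, j₁, j₂, hlt, hu.congr hd, hv⟩

lemma LeftOf.descend_right {x u v : ℕ} (h : T.LeftOf u v) (hd : T.Descend x v) :
    T.LeftOf u x := by
  obtain ⟨z, j₁, j₂, hlt, hu, hv⟩ := h
  exact ⟨z, j₁, j₂, hlt, hu, hv.congr hd⟩

lemma leftOf_total {u v : ℕ} (h1u : 1 ≤ u) (h2u : u ≤ n) (h1v : 1 ≤ v) (h2v : v ≤ n)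
    (hd1 : ¬ T.Descend u v) (hd2 : ¬ T.Descend v u) :
    T.LeftOf u v ∨ T.LeftOf v u := by
  set S : Set ℕ := {z | T.Descend u z ∧ T.Descend v z} with hS
  have hne : S.Nonempty := ⟨n, descend_root h1u h2u, descend_root h1v h2v⟩
  set z := sInf S with hz
  have hzS : z ∈ S := Nat.sInf_mem hne
  obtain ⟨hdu, hdv⟩ := hzS
  have hz1 : 1 ≤ z := hdu.one_le'.1
  have hzn : z ≤ n := hdu.one_le'.2
  have hzu : z ≠ u := fun h => hd2 (h ▸ hdv)
  have hzv : z ≠ v := fun h => hd1 (h ▸ hdu)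
  obtain ⟨ku, hku, hbu⟩ := hdu
  obtain ⟨kv, hkv, hbv⟩ := hdv
  have hku0 : ku ≠ 0 := fun h => hzu (by rw [← hku, h, Function.iterate_zero_apply])
  have hkv0 : kv ≠ 0 := fun h => hzv (by rw [← hkv, h, Function.iterate_zero_apply])
  obtain ⟨ku', rfl⟩ : ∃ k', ku = k' + 1 := ⟨ku - 1, by omega⟩
  obtain ⟨kv', rfl⟩ : ∃ k', kv = k' + 1 := ⟨kv - 1, by omega⟩
  set cu := T.parent^[ku'] u with hcu
  set cv := T.parent^[kv'] v with hcv
  have hpcu : T.parent cu = z := by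
    have h' := hku; rw [Function.iterate_succ_apply'] at h'; exact h'
  have hpcv : T.parent cv = z := by
    have h' := hkv; rw [Function.iterate_succ_apply'] at h'; exact h'
  have hdcu : T.Descend u cu := ⟨ku', rfl, fun m hm => hbu m (by omega)⟩
  have hdcv : T.Descend v cv := ⟨kv', rfl, fun m hm => hbv m (by omega)⟩
  have hcub := hbu ku' (by omega)
  have hcvb := hbv kv' (by omega)
  rw [← hcu] at hcub
  rw [← hcv] at hcvb
  have hculn : cu < n := by
    have := T.lt_parent hcub.1 hcub.2 (by rw [hpcu]; exact hz1)
    omega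
  have hcvln : cv < n := by
    have := T.lt_parent hcvb.1 hcvb.2 (by rw [hpcv]; exact hz1)
    omega
  have hcne : cu ≠ cv := by
    intro h
    have hcS : cu ∈ S := ⟨hdcu, h ▸ hdcv⟩
    have := Nat.sInf_le hcS
    have : cu < T.parent cu := T.lt_parent hcub.1 hcub.2 (by rw [hpcu]; exact hz1)
    rw [hpcu] at this
    omega
  have hine : T.idx cu ≠ T.idx cv := by
    intro h
    exact hcne (T.slot_inj cu cv hcub.1 hculn hcvb.1 hcvln (by rw [hpcu, hpcv]) h)
  have hiu : T.InSub z (T.idx cu) u := ⟨cu, hdcu, hpcu, rfl⟩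
  have hiv : T.InSub z (T.idx cv) v := ⟨cv, hdcv, hpcv, rfl⟩
  rcases Nat.lt_or_ge (T.idx cu) (T.idx cv) with h | h
  · exact Or.inl ⟨z, _, _, h, hiu, hiv⟩
  · exact Or.inr ⟨z, _, _, by omega, hiv, hiu⟩

lemma leftOf_asymm {u v : ℕ} (h1 : T.LeftOf u v) (h2 : T.LeftOf v u) : False := by
  obtain ⟨z₁, i₁, i₂, hi, h1u, h1v⟩ := h1
  obtain ⟨z₂, l₁, l₂, hl, h2v, h2u⟩ := h2
  have hz₁ : 1 ≤ z₁ := leftOf_witness_pos hi h1v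
  have hz₂ : 1 ≤ z₂ := leftOf_witness_pos hl h2u
  have hduz₁ : T.Descend u z₁ := h1u.descend hz₁
  have hduz₂ : T.Descend u z₂ := h2u.descend hz₂
  have hdvz₁ : T.Descend v z₁ := h1v.descend hz₁
  have hdvz₂ : T.Descend v z₂ := h2v.descend hz₂
  rcases descend_total hduz₁ hduz₂ with hd | hd
  · by_cases he : z₁ = z₂
    · subst he
      have e1 := inSub_unique h1u h2u
      have e2 := inSub_unique h1v h2v
      omega
    · have hb := inSub_between hduz₁ hd he h2u
      have := hb.congr hdvz₁
      have := inSub_unique h2v this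
      omega
  · by_cases he : z₂ = z₁
    · subst he
      have e1 := inSub_unique h1u h2u
      have e2 := inSub_unique h1v h2v
      omega
    · have hb := inSub_between hdvz₂ hd he h1v
      have := hb.congr hduz₂
      have := inSub_unique h1u this
      omega

lemma leftOf_trans {x y z : ℕ} (h1 : T.LeftOf x y) (h2 : T.LeftOf y z) :
    T.LeftOf x z := by
  obtain ⟨z₁, i₁, i₂, hi, h1x, h1y⟩ := h1
  obtain ⟨z₂, l₁, l₂, hl, h2y, h2z⟩ := h2
  have hz₁ : 1 ≤ z₁ := leftOf_witness_pos hi h1y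
  have hz₂ : 1 ≤ z₂ := leftOf_witness_pos hl h2z
  have hdy₁ : T.Descend y z₁ := h1y.descend hz₁
  have hdy₂ : T.Descend y z₂ := h2y.descend hz₂
  rcases descend_total hdy₁ hdy₂ with hd | hd
  · by_cases he : z₁ = z₂
    · subst he
      have e := inSub_unique h1y h2y
      exact ⟨z₁, i₁, l₂, by omega, h1x, h2z⟩
    · -- z₁ strictly below z₂ : slot of x at z₂ = slot of z₁ at z₂ = slot of y at z₂ = l₁
      have hb : T.InSub z₂ l₁ z₁ := inSub_between hdy₁ hd he h2y
      have hx₁ : T.Descend x z₁ := h1x.descend hz₁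
      have : T.InSub z₂ l₁ x := hb.congr hx₁
      exact ⟨z₂, l₁, l₂, hl, this, h2z⟩
  · by_cases he : z₂ = z₁
    · subst he
      have e := inSub_unique h1y h2y
      exact ⟨z₂, i₁, l₂, by omega, h1x, h2z⟩
    · -- z₂ strictly below z₁ : slot of z at z₁ = slot of z₂ at z₁ = slot of y at z₁ = i₂
      have hb : T.InSub z₁ i₂ z₂ := inSub_between hdy₂ hd he h1y
      have hz : T.Descend z z₂ := h2z.descend hz₂
      have : T.InSub z₁ i₂ z := hb.congr hz
      exact ⟨z₁, i₁, i₂, hi, h1x, this⟩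

end SDecTree
namespace SDecTree

variable {n : ℕ} {s : ℕ → ℕ} {T : SDecTree n s}

lemma card_of_inSub {y j x : ℕ} (h : T.InSub y j x) : T.card y x = j := by
  rw [card, dif_pos ⟨j, h⟩]
  exact inSub_unique (Exists.choose_spec (⟨j, h⟩ : ∃ j, T.InSub y j x)) h

lemma card_of_not_inSub {y x : ℕ} (h : ¬ ∃ j, T.InSub y j x) :
    T.card y x = if 1 ≤ x ∧ x < y ∧ y ≤ n ∧ ¬ T.LeftOf x y then s y else 0 := by
  rw [card, dif_neg h]

lemma card_pos_valid {y x : ℕ} (h : T.card y x ≠ 0) :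
    1 ≤ x ∧ x < y ∧ y ≤ n := by
  by_cases hi : ∃ j, T.InSub y j x
  · obtain ⟨j, hj⟩ := hi
    rw [card_of_inSub hj] at h
    have hy : 1 ≤ y := by
      by_contra hy
      have : y = 0 := by omega
      subst this
      exact h (inSub_zero hj)
    have := inSub_valid hy hj
    exact ⟨this.1, this.2.1, this.2.2.1⟩
  · rw [card_of_not_inSub hi] at h
    by_cases hc : 1 ≤ x ∧ x < y ∧ y ≤ n ∧ ¬ T.LeftOf x y
    · exact ⟨hc.1, hc.2.1, hc.2.2.1⟩
    · rw [if_neg hc] at h; omega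

/-- Extract the else-branch data when `card ≠ 0` and `x` is not in a subtree of `y`. -/
lemma card_pos_not_inSub {y x : ℕ} (h : T.card y x ≠ 0) (hni : ¬ ∃ j, T.InSub y j x) :
    T.card y x = s y ∧ 1 ≤ x ∧ x < y ∧ y ≤ n ∧ ¬ T.LeftOf x y := by
  have hite := card_of_not_inSub (T := T) (y := y) (x := x) hni
  by_cases hc : 1 ≤ x ∧ x < y ∧ y ≤ n ∧ ¬ T.LeftOf x y
  · rw [if_pos hc] at hite; exact ⟨hite, hc⟩
  · rw [if_neg hc] at hite; exact absurd hite h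

lemma not_descend_of_not_inSub {x y : ℕ} (hxy : x ≠ y) (hni : ¬ ∃ j, T.InSub y j x) :
    ¬ T.Descend x y := fun hd => hni (exists_inSub_of_descend hd hxy)

lemma not_descend_of_lt {x y : ℕ} (hlt : x < y) : ¬ T.Descend y x := fun hd => by
  have := hd.le; omega

lemma card_eq_s_of {y x : ℕ} (h1 : 1 ≤ x) (h2 : x < y) (h3 : y ≤ n)
    (hni : ¬ ∃ j, T.InSub y j x) (hnl : ¬ T.LeftOf x y) : T.card y x = s y := by
  rw [card_of_not_inSub hni, if_pos ⟨h1, h2, h3, hnl⟩]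

/-- Transitivity of the multi-inversion set of a tree. -/
lemma card_trans {u v w : ℕ} (huv : u < v) (hvw : v < w) (hvu : T.card v u ≠ 0) :
    T.card w v ≤ T.card w u := by
  have hval := card_pos_valid hvu
  obtain ⟨hu1, _, hvn⟩ := hval
  have hv1 : 1 ≤ v := by omega
  have hw1 : 1 ≤ w := by omega
  by_cases h2 : ∃ j₂, T.InSub w j₂ v
  · obtain ⟨j₂, hj₂⟩ := h2
    rw [card_of_inSub hj₂]
    have hvdw : T.Descend v w := hj₂.descend hw1
    have hwn : w ≤ n := (inSub_valid hw1 hj₂).2.2.1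
    by_cases h1 : ∃ j, T.InSub v j u
    · obtain ⟨j, hj⟩ := h1
      have : T.InSub w j₂ u := hj₂.congr (hj.descend hv1)
      rw [card_of_inSub this]
    · obtain ⟨_, _, _, _, hnl⟩ := card_pos_not_inSub hvu h1
      by_cases h3 : ∃ j, T.InSub w j u
      · obtain ⟨j, hj⟩ := h3
        rw [card_of_inSub hj]
        by_contra hjj
        exact hnl ⟨w, j, j₂, by omega, hj, hj₂⟩
      · have hnlw : ¬ T.LeftOf u w := by
          rintro ⟨z, l₁, l₂, hlt, hu, hw⟩
          exact hnl ⟨z, l₁, l₂, hlt, hu, hw.congr hvdw⟩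
        rw [card_eq_s_of hu1 (by omega) hwn h3 hnlw]
        exact (inSub_valid hw1 hj₂).2.2.2
  · -- v is not in a subtree of w
    rw [card_of_not_inSub h2]
    split
    case neg.isFalse => omega
    case neg.isTrue hc =>
      obtain ⟨_, _, hwn, hnlvw⟩ := hc
      have hLwv : T.LeftOf w v := by
        rcases leftOf_total hv1 hvn hw1 hwn
          (not_descend_of_not_inSub (by omega) h2) (not_descend_of_lt hvw) with h | h
        · exact absurd h hnlvw
        · exact h
      have hLwu : T.LeftOf w u := by
        by_cases h1 : ∃ j, T.InSub v j u
        · obtain ⟨j, hj⟩ := h1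
          exact hLwv.descend_right (hj.descend hv1)
        · obtain ⟨_, _, _, _, hnl⟩ := card_pos_not_inSub hvu h1
          have hLvu : T.LeftOf v u := by
            rcases leftOf_total hu1 (by omega) hv1 hvn
              (not_descend_of_not_inSub (by omega) h1) (not_descend_of_lt huv) with h | h
            · exact absurd h hnl
            · exact h
          exact leftOf_trans hLwv hLvu
      have h3 : ¬ ∃ j, T.InSub w j u := by
        rintro ⟨j, hj⟩
        exact not_leftOf_right (hj.descend hw1) hLwu
      rw [card_eq_s_of hu1 (by omega) hwn h3 (fun h => leftOf_asymm h hLwu)]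

end SDecTree
namespace SDecTree

variable {n : ℕ} {s : ℕ → ℕ} {T : SDecTree n s}

/-- For a weak ancestor `b` of `u` below `w`, the pair `(w,u)` dominates `(w,b)`. -/
lemma card_le_of_descend {u b w : ℕ} (hd : T.Descend u b) (hbw : b < w) :
    T.card w b ≤ T.card w u := by
  have hu1 : 1 ≤ u := hd.one_le.1
  have hb1 : 1 ≤ b := hd.one_le'.1
  have hub : u ≤ b := hd.le
  by_cases h2 : ∃ j, T.InSub w j b
  · obtain ⟨j, hj⟩ := h2
    rw [card_of_inSub hj, card_of_inSub (hj.congr hd)]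
  · rw [card_of_not_inSub h2]
    split
    case neg.isFalse => omega
    case neg.isTrue hc =>
      obtain ⟨_, _, hwn, hnlbw⟩ := hc
      have hw1 : 1 ≤ w := by omega
      have h3 : ¬ ∃ j, T.InSub w j u := by
        rintro ⟨j, hj⟩
        have hduw : T.Descend u w := hj.descend hw1
        rcases descend_total hd hduw with h | h
        · exact h2 (exists_inSub_of_descend h (by omega))
        · have := h.le; omega
      have hnluw : ¬ T.LeftOf u w := by
        rintro ⟨z, l₁, l₂, hlt, hu, hw⟩
        have hz1 : 1 ≤ z := leftOf_witness_pos hlt hw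
        have hduz : T.Descend u z := hu.descend hz1
        rcases descend_total hd hduz with h | h
        · by_cases hbz : b = z
          · subst hbz
            have := (hw.descend hz1).le; omega
          · have : T.InSub z l₁ b := inSub_between hd h hbz hu
            exact hnlbw ⟨z, l₁, l₂, hlt, this, hw⟩
        · have := (hw.descend hz1).le
          have := h.le
          omega
      rw [card_eq_s_of hu1 (by omega) hwn h3 hnluw]

section Ascent

variable {a b : ℕ}

lemma ascent_card (asc : T.TreeAscent a b) :
    T.InSub b (T.card b a) a ∧ T.card b a < s b := by
  obtain ⟨_, _, _, ⟨i, his, hia⟩, _, _⟩ := id asc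
  rw [card_of_inSub hia]
  exact ⟨hia, his⟩

lemma minus0_descend (asc : T.TreeAscent a b) {x : ℕ} (h : T.InSubMinus0 a x) :
    T.Descend x a := by
  obtain ⟨ha1, hab, hbn, _, _, _⟩ := id asc
  rcases h with rfl | ⟨j, hj0, hj⟩
  · exact descend_refl ha1 (by omega)
  · exact hj.descend ha1

lemma minus0_card (asc : T.TreeAscent a b) {x : ℕ} (h : T.InSubMinus0 a x) :
    T.card b x = T.card b a :=
  card_of_inSub ((ascent_card asc).1.congr (minus0_descend asc h))

/-- Key case: `v ∈ T^a∖0`, `u ∉ T^a∖0`, `(v,u)` an inversion: then `#(b,u) ≥ #(b,a)+1`. -/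
lemma hc1 (asc : T.TreeAscent a b) {u v : ℕ} (hMv : T.InSubMinus0 a v)
    (hMu : ¬ T.InSubMinus0 a u) (huv : u < v) (hvu : T.card v u ≠ 0) :
    T.card b a + 1 ≤ T.card b u := by
  obtain ⟨ha1, hab, hbn, _, cond2, cond3⟩ := id asc
  obtain ⟨hia, his⟩ := ascent_card asc
  set i := T.card b a with hi
  have hdva : T.Descend v a := minus0_descend asc hMv
  have hva : v ≤ a := hdva.le
  have hda_b : T.Descend a b := hia.descend (by omega)
  obtain ⟨hu1, _, hvn⟩ := card_pos_valid hvu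
  have hv1 : 1 ≤ v := by omega
  by_cases h1 : ∃ j, T.InSub v j u
  · obtain ⟨j, hj⟩ := h1
    exfalso
    have hj0 : j ≠ 0 := by rw [card_of_inSub hj] at hvu; exact hvu
    rcases hMv with rfl | ⟨j', hj'0, hj'⟩
    · exact hMu (Or.inr ⟨j, by omega, hj⟩)
    · exact hMu (Or.inr ⟨j', hj'0, hj'.congr (hj.descend hv1)⟩)
  · obtain ⟨_, _, _, _, hnl⟩ := card_pos_not_inSub hvu h1
    have hLvu : T.LeftOf v u := by
      rcases leftOf_total hu1 (by omega) hv1 hvn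
        (not_descend_of_not_inSub (by omega) h1) (not_descend_of_lt huv) with h | h
      · exact absurd h hnl
      · exact h
    obtain ⟨z, m₁, m₂, hm, hzv, hzu⟩ := hLvu
    have hz1 : 1 ≤ z := leftOf_witness_pos hm hzu
    have hdvz : T.Descend v z := hzv.descend hz1
    have hduz : T.Descend u z := hzu.descend hz1
    by_cases hza : z = a
    · subst hza
      exact absurd (Or.inr ⟨m₂, by omega, hzu⟩) hMu
    rcases descend_total hdvz hdva with hd | hd
    · -- z strictly below a
      exfalso
      obtain ⟨q, hq⟩ := exists_inSub_of_descend hd hza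
      have hqu : T.InSub a q u := hq.congr hduz
      have hqv : T.InSub a q v := hq.congr hdvz
      have hq0 : 0 < q := by
        rcases hMv with rfl | ⟨j', hj'0, hj'⟩
        · have := hd.antisymm hdvz; omega
        · have := inSub_unique hqv hj'; omega
      exact hMu (Or.inr ⟨q, hq0, hqu⟩)
    · -- a strictly below z
      by_cases hzb : z = b
      · rw [hzb] at hzv hzu
        have : T.InSub b i v := hia.congr hdva
        have hm₁ : m₁ = i := inSub_unique hzv this
        rw [card_of_inSub hzu]
        omega
      rcases descend_total hd (hda_b) with hd2 | hd2
      · -- z strictly between a and b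
        exfalso
        have haz : a < z := lt_of_le_of_ne hd.le fun h => hza h.symm
        have hzb' : z < b := lt_of_le_of_ne hd2.le hzb
        have hma : T.InSub z m₁ a := inSub_between hdva hd (fun h => hza h.symm) hzv
        have := cond2 z m₁ haz hzb' hma
        have := (inSub_valid hz1 hzu).2.2.2
        omega
      · -- b strictly below z
        have hbz : b ≠ z := fun h => hzb h.symm
        have hmb : T.InSub z m₁ b := inSub_between (hdva.trans hda_b) hd2 hbz hzv
        have hLbu : T.LeftOf b u := ⟨z, m₁, m₂, hm, hmb, hzu⟩
        have hni : ¬ ∃ j, T.InSub b j u := by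
          rintro ⟨j, hj⟩
          have hdub : T.Descend u b := hj.descend (by omega)
          have : T.InSub z m₂ b := inSub_between hdub hd2 hbz hzu
          have := inSub_unique hmb this
          omega
        rw [card_eq_s_of hu1 (by omega) hbn hni (fun h => leftOf_asymm h hLbu)]
        omega

/-- Key case: `u ∈ T^a∖0`, `v ∉ T^a∖0`, `(v,u)` an inversion, `v < b`:
then `#(b,v) ≤ #(b,a)+1`. -/
lemma hc2 (asc : T.TreeAscent a b) {u v : ℕ} (hMu : T.InSubMinus0 a u)
    (hMv : ¬ T.InSubMinus0 a v) (huv : u < v) (hvb : v < b) (hvu : T.card v u ≠ 0) :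
    T.card b v ≤ T.card b a + 1 := by
  obtain ⟨ha1, hab, hbn, _, cond2, cond3⟩ := id asc
  obtain ⟨hia, his⟩ := ascent_card asc
  set i := T.card b a with hi
  have hdua : T.Descend u a := minus0_descend asc hMu
  have hua : u ≤ a := hdua.le
  have hda_b : T.Descend a b := hia.descend (by omega)
  obtain ⟨hu1, _, hvn⟩ := card_pos_valid hvu
  have hv1 : 1 ≤ v := by omega
  have cardv_of_desc : T.Descend v a → T.card b v ≤ i + 1 := by
    intro hd
    rw [card_of_inSub (hia.congr hd)]
    omega
  by_cases h1 : ∃ j, T.InSub v j u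
  · obtain ⟨j, hj⟩ := h1
    have hduv : T.Descend u v := hj.descend hv1
    rcases descend_total hdua hduv with hd | hd
    · -- a weakly below v
      by_cases hav : a = v
      · exact absurd (Or.inl hav.symm) hMv
      · -- a strictly below v; then v is on the path from a to b
        have hdvb : T.Descend v b := by
          rcases descend_total hd hda_b with h | h
          · exact h
          · have := h.le; omega
        have : T.InSub b i v := inSub_between hd hdvb (by omega) hia
        rw [card_of_inSub this]
        omega
    · exact cardv_of_desc hd
  · obtain ⟨_, _, _, _, hnl⟩ := card_pos_not_inSub hvu h1
    have hLvu : T.LeftOf v u := by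
      rcases leftOf_total hu1 (by omega) hv1 hvn
        (not_descend_of_not_inSub (by omega) h1) (not_descend_of_lt huv) with h | h
      · exact absurd h hnl
      · exact h
    obtain ⟨z, m₁, m₂, hm, hzv, hzu⟩ := hLvu
    have hz1 : 1 ≤ z := leftOf_witness_pos hm hzu
    have hdvz : T.Descend v z := hzv.descend hz1
    have hduz : T.Descend u z := hzu.descend hz1
    rcases descend_total hduz hdua with hd | hd
    · -- z weakly below a
      exact cardv_of_desc (hdvz.trans hd)
    · -- a weakly below z
      by_cases haz : a = z
      · exact cardv_of_desc (by rw [haz]; exact hdvz)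
      by_cases hzb : z = b
      · rw [hzb] at hzv hzu
        have : T.InSub b i u := hia.congr hdua
        have hm₂ : m₂ = i := inSub_unique hzu this
        rw [card_of_inSub hzv]
        omega
      rcases descend_total hd hda_b with hd2 | hd2
      · -- z strictly between a and b
        have : T.InSub b i z := inSub_between hd hd2 hzb hia
        rw [card_of_inSub (this.congr hdvz)]
        omega
      · -- b strictly below z
        have hbz : b ≠ z := fun h => hzb h.symm
        have hmb : T.InSub z m₂ b := inSub_between (hdua.trans hda_b) hd2 hbz hzu
        have hLvb : T.LeftOf v b := ⟨z, m₁, m₂, hm, hzv, hmb⟩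
        have hni : ¬ ∃ j, T.InSub b j v := by
          rintro ⟨j, hj⟩
          have hdvb : T.Descend v b := hj.descend (by omega)
          have : T.InSub z m₁ b := inSub_between hdvb hd2 hbz hzv
          have := inSub_unique hmb this
          omega
        rw [card_of_not_inSub hni, if_neg (fun hc => hc.2.2.2 hLvb)]
        omega

end Ascent

end SDecTree
namespace SDecTree

variable {n : ℕ} {s : ℕ → ℕ} {T Z : SDecTree n s} {a b : ℕ}

/-- The transitive extension of `inv T + (b,a)`: bump row `b` on the vertices of `T^a∖0`. -/
noncomputable def Jrot (T : SDecTree n s) (a b : ℕ) : ℕ → ℕ → ℕ := fun y x =>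
  if y = b ∧ T.InSubMinus0 a x then T.card y x + 1 else T.card y x

lemma jrot_ge_addInv (_asc : T.TreeAscent a b) (y x : ℕ) :
    addInv s T.card b a y x ≤ Jrot T a b y x := by
  simp only [addInv, Jrot]
  by_cases h : y = b ∧ x = a
  · rw [if_pos h, if_pos ⟨h.1, Or.inl h.2⟩]
    exact min_le_left _ _
  · rw [if_neg h]
    split <;> omega

lemma jrot_trans (asc : T.TreeAscent a b) : IsTransitiveInv (Jrot T a b) := by
  obtain ⟨ha1, hab, hbn, -, -, -⟩ := id asc
  obtain ⟨hia, his⟩ := ascent_card asc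
  intro u v w huv hvw
  rcases eq_or_ne (Jrot T a b v u) 0 with h0 | h0
  · exact Or.inl h0
  right
  by_cases hw : w = b
  · have hvb : v ≠ b := by omega
    have hcvu : T.card v u ≠ 0 := by
      rw [show Jrot T a b v u = T.card v u from
        if_neg (fun hc => hvb hc.1)] at h0
      exact h0
    rw [hw]
    show (if _ ∧ _ then _ else _) ≤ (if _ ∧ _ then _ else _)
    by_cases hMv : T.InSubMinus0 a v <;> by_cases hMu : T.InSubMinus0 a u
    · rw [if_pos ⟨rfl, hMv⟩, if_pos ⟨rfl, hMu⟩,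
        minus0_card asc hMv, minus0_card asc hMu]
    · rw [if_pos ⟨rfl, hMv⟩, if_neg (fun hc => hMu hc.2), minus0_card asc hMv]
      exact hc1 asc hMv hMu huv hcvu
    · rw [if_neg (fun hc => hMv hc.2), if_pos ⟨rfl, hMu⟩, minus0_card asc hMu]
      exact hc2 asc hMu hMv huv (by omega) hcvu
    · rw [if_neg (fun hc => hMv hc.2), if_neg (fun hc => hMu hc.2)]
      exact card_trans huv (by omega) hcvu
  · rw [show Jrot T a b w v = T.card w v from if_neg (fun hc => hw hc.1),
      show Jrot T a b w u = T.card w u from if_neg (fun hc => hw hc.1)]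
    by_cases hcvu : T.card v u = 0
    · by_cases hc : v = b ∧ T.InSubMinus0 a u
      · have hdub : T.Descend u b :=
          (minus0_descend asc hc.2).trans (hia.descend (by omega))
        rw [hc.1]
        exact card_le_of_descend hdub (by omega)
      · rw [show Jrot T a b v u = T.card v u from if_neg hc] at h0
        exact absurd hcvu h0
    · exact card_trans huv hvw hcvu

lemma tcInv_le_of {I J : ℕ → ℕ → ℕ} (hJ : IsTransitiveInv J)
    (hle : ∀ y x, I y x ≤ J y x) (y x : ℕ) : tcInv I y x ≤ J y x :=
  Nat.sInf_le ⟨J, hJ, hle, rfl⟩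

/-- The inversions added by a rotation all lie in `{b} × (T^a∖0)`. -/
lemma aset_sub (hZ : T.IsRotation Z a b) :
    T.Aset Z ⊆ {p | p.1 = b ∧ T.InSubMinus0 a p.2} := by
  intro p hp
  have hp' : T.card p.1 p.2 < Z.card p.1 p.2 := hp
  have hnz : Z.card p.1 p.2 ≠ 0 := by omega
  obtain ⟨h1, h2, h3⟩ := card_pos_valid hnz
  rw [hZ.2 p.1 p.2 h1 h2 h3] at hp'
  have hle := tcInv_le_of (jrot_trans hZ.1) (jrot_ge_addInv hZ.1) p.1 p.2
  have hlt : T.card p.1 p.2 < Jrot T a b p.1 p.2 := lt_of_lt_of_le hp' hle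
  by_cases hc : p.1 = b ∧ T.InSubMinus0 a p.2
  · exact hc
  · rw [show Jrot T a b p.1 p.2 = T.card p.1 p.2 from if_neg hc] at hlt
    omega

lemma ascents_no_common {c d : ℕ} (asc1 : T.TreeAscent a b) (asc2 : T.TreeAscent c d)
    (hac : a < c) (hbd : b = d) {x : ℕ} (h1 : T.InSubMinus0 a x)
    (h2 : T.InSubMinus0 c x) : False := by
  obtain ⟨ha1, hab, hbn, -, cond2a, -⟩ := id asc1
  obtain ⟨hc1', hcd, hdn, -, -, cond3c⟩ := id asc2
  have hxa : T.Descend x a := minus0_descend asc1 h1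
  have hxlea : x ≤ a := hxa.le
  rcases h2 with rfl | ⟨j', hj'0, hj'⟩
  · omega
  · have hja : T.InSub c j' a := by
      obtain ⟨cc, hdxcc, hpcc, hicc⟩ := hj'
      rcases descend_total hxa hdxcc with hd | hd
      · exact ⟨cc, hd, hpcc, hicc⟩
      · rcases eq_or_ne cc a with rfl | hne
        · exact ⟨cc, descend_refl ha1 (by omega), hpcc, hicc⟩
        · exfalso
          have h' := descend_step hd hne
          rw [hpcc] at h'
          have := h'.le
          omega
    have hsc : j' = s c := cond2a c j' hac (by omega) hja
    have := cond3c (by omega) a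
    rw [← hsc] at this
    exact this hja

lemma aset_fset_contra {c : ℕ} (asc1 : T.TreeAscent a b) (hac : a < c)
    (h0 : T.InSub c 0 a) {x : ℕ} (h1 : T.InSubMinus0 a x)
    (h2 : T.InSubMinus0 c x) : False := by
  have hxa : T.Descend x a := minus0_descend asc1 h1
  have hxlea : x ≤ a := hxa.le
  rcases h2 with rfl | ⟨j', hj'0, hj'⟩
  · omega
  · have : T.InSub c 0 x := h0.congr hxa
    have := inSub_unique hj' this
    omega

end SDecTree
/-- the sets `A_T(a,b)`, `A_T(c,d)` and `F_T(a,c)` are pairwise disjoint,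
for tree ascents `(a,b)` and `(c,d)` of `T` with `a < c`. -/
theorem no_common_inversions_added (n : ℕ) (s : ℕ → ℕ) (T Z Q : SDecTree n s)
    (a b c d : ℕ) (hac : a < c)
    (hZ : SDecTree.IsRotation T Z a b) (hQ : SDecTree.IsRotation T Q c d) :
    Disjoint (SDecTree.Aset T Z) (SDecTree.Aset T Q) ∧
    Disjoint (SDecTree.Aset T Z) (SDecTree.Fset T a b c d) ∧
    Disjoint (SDecTree.Aset T Q) (SDecTree.Fset T a b c d) := by
  have asc1 := hZ.1
  have asc2 := hQ.1
  have hcd : c < d := asc2.2.1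
  refine ⟨?_, ?_, ?_⟩ <;> rw [Set.disjoint_left]
  · intro p hp1 hp2
    obtain ⟨hpb, hM1⟩ := SDecTree.aset_sub hZ hp1
    obtain ⟨hpd, hM2⟩ := SDecTree.aset_sub hQ hp2
    exact SDecTree.ascents_no_common asc1 asc2 hac (hpb.symm.trans hpd) hM1 hM2
  · intro p hp1 hpF
    obtain ⟨hpb, hM1⟩ := SDecTree.aset_sub hZ hp1
    obtain ⟨hbc, h0, hpd, hMF⟩ := hpF
    have : b = d := hpb.symm.trans hpd
    omega
  · intro p hp2 hpF
    obtain ⟨hpd, hM2⟩ := SDecTree.aset_sub hQ hp2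
    obtain ⟨hbc, h0, hpd', hMF⟩ := hpF
    exact SDecTree.aset_fset_contra asc1 hac h0 hMF hM2
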